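/- For every monoid H, the reduced finitary power monoid 𝒫fin,1(H) is FmF: every X ∈ 𝒫fin,1(H) with X ≠ {1_H} admits a minimal factorization into irreducibles, and each X has only finitely many minimal factorizations up to permutation. -/

import Mathlib

open scoped Pointwise

section Defs

variable {M : Type*} [Monoid M]

/-- `x` divides `y` (two-sidedly) in a monoid: `y = u * x * v` for some `u v`. -/
def dvdTS (x y : M) : Prop := ∃ u v : M, y = u * x * v

/-- A non-unit-divisor: an element that does not divide `1`. -/
def isNonUnitDivisor (x : M) : Prop := ¬ dvdTS x 1

/-- `x` properly divides `y`: `x` divides `y` but `y` does not divide `x`. -/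
def properDvdTS (x y : M) : Prop := dvdTS x y ∧ ¬ dvdTS y x

/-- An irreducible: a non-unit-divisor `a` with `a ≠ x * y` whenever `x, y` are
non-unit-divisors properly dividing `a`. -/
def isIrred (a : M) : Prop :=
  isNonUnitDivisor a ∧
    ∀ x y : M, isNonUnitDivisor x → isNonUnitDivisor y →
      properDvdTS x a → properDvdTS y a → a ≠ x * y

/-- An atom: a non-unit-divisor that is not a product of two non-unit-divisors. -/
def isAtomTS (a : M) : Prop :=
  isNonUnitDivisor a ∧ ∀ x y : M, isNonUnitDivisor x → isNonUnitDivisor y → a ≠ x * y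

/-- A quark: a non-unit-divisor not properly divided by any non-unit-divisor. -/
def isQuarkTS (a : M) : Prop :=
  isNonUnitDivisor a ∧ ∀ x : M, isNonUnitDivisor x → ¬ properDvdTS x a

/-- A factorization of `x` into irreducibles, recorded as a list. -/
def IsFactorization (l : List M) (x : M) : Prop :=
  (∀ a ∈ l, isIrred a) ∧ l.prod = x

/-- A minimal factorization: a factorization of `x` such that no product, in any order,
of a proper sub-multiset of its factors equals `x`. -/
def IsMinimalFactorization (l : List M) (x : M) : Prop :=
  IsFactorization l x ∧
    ∀ l' : List M, (↑l' : Multiset M) < (↑l : Multiset M) → l'.prod ≠ x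

end Defs

/-- A unique minimal factorization (UmF) monoid: every non-identity element has a minimal
factorization into irreducibles, unique up to permutation of the factors. -/
def IsUmF (M : Type*) [Monoid M] : Prop :=
  (∀ x : M, x ≠ 1 → ∃ l : List M, IsMinimalFactorization l x) ∧
    ∀ x : M, ∀ l l' : List M,
      IsMinimalFactorization l x → IsMinimalFactorization l' x → l.Perm l'

/-- The reduced finitary power monoid `𝒫fin,1(H)` of a monoid `H`: the submonoid of
`Finset H` (under pointwise multiplication) of finite subsets containing `1`. -/
def redPow (H : Type*) [Monoid H] [DecidableEq H] : Submonoid (Finset H) where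
  carrier := {X : Finset H | (1 : H) ∈ X}
  one_mem' := by simp
  mul_mem' := by
    intro X Y hX hY
    simpa using Finset.mul_mem_mul hX hY

section Aux

variable {H : Type*} [Monoid H] [DecidableEq H]

lemma RP.one_mem (A : redPow H) : (1 : H) ∈ (A : Finset H) := A.prop

lemma RP.coe_mul (A B : redPow H) :
    ((A * B : redPow H) : Finset H) = (A : Finset H) * (B : Finset H) := rfl

lemma RP.subset_mul_left (A B : redPow H) :
    (A : Finset H) ⊆ ((A * B : redPow H) : Finset H) := by
  intro x hx
  have h := Finset.mul_mem_mul hx (RP.one_mem B)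
  rw [mul_one] at h
  exact h

lemma RP.subset_mul_right (A B : redPow H) :
    (B : Finset H) ⊆ ((A * B : redPow H) : Finset H) := by
  intro x hx
  have h := Finset.mul_mem_mul (RP.one_mem A) hx
  rw [one_mul] at h
  exact h

lemma RP.dvd_subset {A X : redPow H} (h : dvdTS A X) : (A : Finset H) ⊆ (X : Finset H) := by
  obtain ⟨u, v, rfl⟩ := h
  calc (A : Finset H) ⊆ ((u * A : redPow H) : Finset H) := RP.subset_mul_right u A
    _ ⊆ ((u * A * v : redPow H) : Finset H) := RP.subset_mul_left _ v

lemma RP.nonunit_iff {A : redPow H} : isNonUnitDivisor A ↔ A ≠ 1 := by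
  constructor
  · intro h hA
    exact h ⟨1, 1, by rw [hA]; simp⟩
  · intro hA h
    apply hA
    have hsub : (A : Finset H) ⊆ ((1 : redPow H) : Finset H) := RP.dvd_subset h
    apply Subtype.ext
    apply subset_antisymm hsub
    intro x hx
    have hx1 : x = 1 := by
      have hx' : x ∈ (1 : Finset H) := hx
      simpa using hx'
    rw [hx1]; exact RP.one_mem A

lemma RP.proper_ssubset {A X : redPow H} (h : properDvdTS A X) :
    (A : Finset H) ⊂ (X : Finset H) := by
  refine ⟨RP.dvd_subset h.1, fun hsub => ?_⟩
  have hAX : A = X := Subtype.ext (subset_antisymm (RP.dvd_subset h.1) hsub)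
  exact h.2 ⟨1, 1, by rw [hAX]; simp⟩

lemma RP.dvd_of_mem {l : List (redPow H)} {a : redPow H} (h : a ∈ l) : dvdTS a l.prod := by
  obtain ⟨s, t, rfl⟩ := List.append_of_mem h
  exact ⟨s.prod, t.prod, by simp [mul_assoc]⟩

lemma RP.exists_factorization :
    ∀ n : ℕ, ∀ X : redPow H, (X : Finset H).card ≤ n → X ≠ 1 →
      ∃ l : List (redPow H), IsFactorization l X := by
  intro n
  induction n with
  | zero =>
    intro X hc _
    have : 0 < (X : Finset H).card := Finset.card_pos.mpr ⟨1, RP.one_mem X⟩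
    omega
  | succ n ih =>
    intro X hcard hX
    by_cases hirr : isIrred X
    · exact ⟨[X], by simpa [IsFactorization] using hirr⟩
    · have hnu : isNonUnitDivisor X := RP.nonunit_iff.mpr hX
      rw [isIrred] at hirr
      push_neg at hirr
      obtain ⟨A, B, hA, hB, hpA, hpB, hXAB⟩ := hirr hnu
      have hAcard : (A : Finset H).card ≤ n := by
        have h1 := Finset.card_lt_card (RP.proper_ssubset hpA)
        omega
      have hBcard : (B : Finset H).card ≤ n := by
        have h1 := Finset.card_lt_card (RP.proper_ssubset hpB)
        omega
      obtain ⟨la, hla⟩ := ih A hAcard (RP.nonunit_iff.mp hA)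
      obtain ⟨lb, hlb⟩ := ih B hBcard (RP.nonunit_iff.mp hB)
      refine ⟨la ++ lb, ?_, ?_⟩
      · intro a ha
        rcases List.mem_append.mp ha with h | h
        exacts [hla.1 a h, hlb.1 a h]
      · rw [List.prod_append, hla.2, hlb.2, hXAB]

lemma RP.exists_minimal (X : redPow H) (hX : X ≠ 1) :
    ∃ l : List (redPow H), IsMinimalFactorization l X := by
  obtain ⟨l0, hl0⟩ := RP.exists_factorization (X : Finset H).card X le_rfl hX
  clear hX
  have key : ∀ n : ℕ, ∀ l : List (redPow H), l.length ≤ n → IsFactorization l X →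
      ∃ l' : List (redPow H), IsMinimalFactorization l' X := by
    intro n
    induction n with
    | zero =>
      intro l hlen hl
      refine ⟨l, hl, fun l' hlt hprod => ?_⟩
      have := Multiset.card_lt_card hlt
      simp at this
      omega
    | succ n ih =>
      intro l hlen hl
      by_cases hmin : ∀ l' : List (redPow H),
          (↑l' : Multiset (redPow H)) < (↑l : Multiset (redPow H)) → l'.prod ≠ X
      · exact ⟨l, hl, hmin⟩
      · push_neg at hmin
        obtain ⟨l', hlt, hprod⟩ := hmin
        have hmem : ∀ a ∈ l', a ∈ l := by
          intro a ha
          have : a ∈ (↑l' : Multiset (redPow H)) := by simpa using ha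
          have h2 : a ∈ (↑l : Multiset (redPow H)) := Multiset.mem_of_le hlt.le this
          simpa using h2
        have hlen' : l'.length ≤ n := by
          have := Multiset.card_lt_card hlt
          simp at this
          omega
        exact ih l' hlen' ⟨fun a ha => hl.1 a (hmem a ha), hprod⟩
  exact key l0.length l0 le_rfl hl0

lemma RP.length_lt_card {X : redPow H} {l : List (redPow H)}
    (h : IsMinimalFactorization l X) : l.length + 1 ≤ (X : Finset H).card := by
  have key : ∀ k ≤ l.length, k + 1 ≤ (((l.take k).prod : redPow H) : Finset H).card := by
    intro k
    induction k with
    | zero =>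
      intro _
      simp only [List.take_zero, List.prod_nil]
      exact Finset.card_pos.mpr ⟨1, RP.one_mem 1⟩
    | succ k ih =>
      intro hk1
      have hk : k < l.length := hk1
      have h1 := ih (le_of_lt hk)
      have hstep : (l.take (k + 1)).prod = (l.take k).prod * l.get ⟨k, hk⟩ :=
        List.prod_take_succ l k hk
      have hsub : (((l.take k).prod : redPow H) : Finset H) ⊆
          (((l.take (k + 1)).prod : redPow H) : Finset H) := by
        rw [hstep]; exact RP.subset_mul_left _ _
      rcases eq_or_ne (((l.take k).prod : redPow H) : Finset H)
          (((l.take (k + 1)).prod : redPow H) : Finset H) with heq | hne'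
      · exfalso
        have hP : (l.take (k + 1)).prod = (l.take k).prod := (Subtype.ext heq).symm
        set l' := l.take k ++ l.drop (k + 1) with hl'
        have hdrop : l.drop k = l.get ⟨k, hk⟩ :: l.drop (k + 1) := by
          simpa using List.drop_eq_getElem_cons hk
        have hlt : (↑l' : Multiset (redPow H)) < (↑l : Multiset (redPow H)) := by
          have hldec : (↑l : Multiset (redPow H)) =
              ↑(l.take k) + (l.get ⟨k, hk⟩ ::ₘ ↑(l.drop (k + 1))) := by
            conv_lhs => rw [← List.take_append_drop k l]
            rw [hdrop]
            rfl
          have hl'dec : (↑l' : Multiset (redPow H)) =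
              ↑(l.take k) + ↑(l.drop (k + 1)) := rfl
          rw [hldec, hl'dec]
          exact add_lt_add_right (Multiset.lt_cons_self _ _) _
        have hprod : l'.prod = X := by
          have : l'.prod = (l.take k).prod * (l.drop (k + 1)).prod := by
            rw [hl', List.prod_append]
          rw [this, ← hP, List.prod_take_mul_prod_drop l (k + 1), h.1.2]
        exact h.2 l' hlt hprod
      · have h2 := Finset.card_lt_card (ssubset_of_subset_of_ne hsub hne')
        omega
  have := key l.length le_rfl
  rw [List.take_length, h.1.2] at this
  exact this

end Aux

theorem stmt_7 {H : Type*} [Monoid H] [DecidableEq H] :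
    (∀ X : redPow H, X ≠ 1 → ∃ l : List (redPow H), IsMinimalFactorization l X) ∧
    ∀ X : redPow H,
      {s : Multiset (redPow H) | ∃ l : List (redPow H),
        (↑l : Multiset (redPow H)) = s ∧ IsMinimalFactorization l X}.Finite := by
  constructor
  · exact fun X hX => RP.exists_minimal X hX
  · intro X
    classical
    set N := (X : Finset H).card with hN
    have hTfin : {A : redPow H | (A : Finset H) ⊆ (X : Finset H)}.Finite := by
      have hset : {A : redPow H | (A : Finset H) ⊆ (X : Finset H)} =
          Subtype.val ⁻¹' (((X : Finset H).powerset : Finset (Finset H)) : Set (Finset H)) := by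
        ext A; simp [Finset.mem_powerset]
      rw [hset]
      exact Set.Finite.preimage (Subtype.val_injective.injOn)
        (Finset.finite_toSet _)
    set m : Multiset (redPow H) := N • hTfin.toFinset.val with hm
    apply Set.Finite.subset (Finset.finite_toSet m.powerset.toFinset)
    rintro s ⟨l, rfl, hmin⟩
    simp only [Finset.mem_coe, Multiset.mem_toFinset, Multiset.mem_powerset]
    rw [Multiset.le_iff_count]
    intro a
    by_cases ha : a ∈ l
    · have hcount : (↑l : Multiset (redPow H)).count a ≤ l.length := by
        simpa using Multiset.count_le_card a (↑l : Multiset (redPow H))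
      have hlen : l.length ≤ N := by
        have := RP.length_lt_card hmin
        omega
      have haT : a ∈ hTfin.toFinset := by
        rw [Set.Finite.mem_toFinset]
        exact RP.dvd_subset (hmin.1.2 ▸ RP.dvd_of_mem ha)
      have hcm : m.count a = N := by
        rw [hm, Multiset.count_nsmul,
          Multiset.count_eq_one_of_mem hTfin.toFinset.nodup haT, mul_one]
      omega
    · rw [Multiset.count_eq_zero_of_notMem (by simpa using ha)]
      exact Nat.zero_le _
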